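/- arXiv:2512.12407 — 2 statements merged into one kernel-verified Lean document; each statement's English description precedes it below -/
import Mathlib

section
/- (Lemma 3.8(ii), *congruence case.) Let k ≥ 1 and μ ∈ ℂ with |μ| > 1. Then H_{2k}(μ) belongs to the closure of the set { P (H_2(μ̃_1) ⊕ ⋯ ⊕ H_2(μ̃_k)) Pᴴ : P ∈ ℂ^{2k×2k} invertible, |μ̃_i| > 1 for all i, and μ̃_i ≠ μ̃_{i'} for i ≠ i' }. -/
open Matrix

noncomputable section

/-- The `k × k` Jordan block `J_k(μ)` (eigenvalue `μ` on the diagonal, `1` on the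
superdiagonal). -/
def Jblock (k : ℕ) (μ : ℂ) : Matrix (Fin k) (Fin k) ℂ :=
  Matrix.of fun i j =>
    if (j : ℕ) = (i : ℕ) then μ else if (j : ℕ) = (i : ℕ) + 1 then 1 else 0

/-- The `k × k` matrix `Γ_k`: in 1-based indexing, the `(i,j)` entry is `(-1)^(k-i)`
when `j = k+1-i` or `j = k+2-i`, and `0` otherwise. -/
def Gamma (k : ℕ) : Matrix (Fin k) (Fin k) ℂ :=
  Matrix.of fun i j =>
    if (i : ℕ) + (j : ℕ) = k - 1 ∨ (i : ℕ) + (j : ℕ) = k then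
      (-1 : ℂ) ^ (k - 1 - (i : ℕ)) else 0

/-- Block-diagonal direct sum of two square complex matrices. -/
def dsum {m n : ℕ} (A : Matrix (Fin m) (Fin m) ℂ) (B : Matrix (Fin n) (Fin n) ℂ) :
    Matrix (Fin (m + n)) (Fin (m + n)) ℂ :=
  Matrix.reindex finSumFinEquiv finSumFinEquiv (Matrix.fromBlocks A 0 0 B)

/-- The `2k × 2k` matrix `H_{2k}(μ) = [[0, I_k], [J_k(μ), 0]]`. -/
def Hblock (k : ℕ) (μ : ℂ) : Matrix (Fin (k + k)) (Fin (k + k)) ℂ :=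
  Matrix.reindex finSumFinEquiv finSumFinEquiv (Matrix.fromBlocks 0 1 (Jblock k μ) 0)

/-- The total size of a family of sizes `p : Fin q → ℕ`. -/
def finSize : {q : ℕ} → (Fin q → ℕ) → ℕ
  | 0, _ => 0
  | _ + 1, p => p 0 + finSize fun i => p i.succ

/-- Block-diagonal direct sum of a family of square complex matrices of sizes
`p 0, …, p (q-1)`. -/
def finDsum : {q : ℕ} → (p : Fin q → ℕ) →
    ((i : Fin q) → Matrix (Fin (p i)) (Fin (p i)) ℂ) →
    Matrix (Fin (finSize p)) (Fin (finSize p)) ℂ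
  | 0, _, _ => 0
  | _ + 1, p, M => dsum (M 0) (finDsum (fun i => p i.succ) fun i => M i.succ)

/-- The `2 × 2` block `H_2(μ) = [[0, 1], [μ, 0]]`. -/
def H2 (μ : ℂ) : Matrix (Fin 2) (Fin 2) ℂ := !![0, 1; μ, 0]

/-- The block-diagonal direct sum `H_2(μ_1) ⊕ ⋯ ⊕ H_2(μ_r)`. -/
def pairH (r : ℕ) (mu : Fin r → ℂ) :
    Matrix (Fin (finSize fun _ : Fin r => 2)) (Fin (finSize fun _ : Fin r => 2)) ℂ :=
  finDsum (fun _ => 2) fun i => H2 (mu i)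


section Aux

open Matrix Finset

lemma finSize_two (k : ℕ) : (finSize fun _ : Fin k => 2) = k + k := by
  induction k with
  | zero => rfl
  | succ n ih =>
      have : (finSize fun _ : Fin (n+1) => 2) = 2 + finSize fun _ : Fin n => 2 := rfl
      omega

/-- entry formula for a reindexed block matrix -/
lemma rfb_apply {m n : ℕ} (P : Matrix (Fin m) (Fin m) ℂ) (Q : Matrix (Fin m) (Fin n) ℂ)
    (R : Matrix (Fin n) (Fin m) ℂ) (T : Matrix (Fin n) (Fin n) ℂ) (a b : Fin (m + n)) :
    Matrix.reindex finSumFinEquiv finSumFinEquiv (Matrix.fromBlocks P Q R T) a b =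
    if ha : (a : ℕ) < m then
      (if hb : (b : ℕ) < m then P ⟨a, ha⟩ ⟨b, hb⟩
       else Q ⟨a, ha⟩ ⟨(b : ℕ) - m, by omega⟩)
    else
      (if hb : (b : ℕ) < m then R ⟨(a : ℕ) - m, by omega⟩ ⟨b, hb⟩
       else T ⟨(a : ℕ) - m, by omega⟩ ⟨(b : ℕ) - m, by omega⟩) := by
  have key : ∀ c : Fin (m + n), finSumFinEquiv.symm c =
      if hc : (c : ℕ) < m then Sum.inl (⟨c, hc⟩ : Fin m)
      else Sum.inr (⟨(c : ℕ) - m, by omega⟩ : Fin n) := by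
    intro c
    rw [Equiv.symm_apply_eq]
    split_ifs with hc
    · rw [finSumFinEquiv_apply_left]; ext; simp
    · rw [finSumFinEquiv_apply_right]; ext; simp [Fin.natAdd]; omega
  rw [reindex_apply, submatrix_apply, key a, key b]
  split_ifs with ha hb hb <;> rfl

set_option maxHeartbeats 1000000 in
/-- entry formula for `pairH` -/
lemma pairH_apply : ∀ (k : ℕ) (mu : Fin k → ℂ) (a b : Fin (finSize fun _ : Fin k => 2)),
    pairH k mu a b =
      if (a : ℕ) % 2 = 0 ∧ (b : ℕ) = (a : ℕ) + 1 then 1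
      else if h : (b : ℕ) % 2 = 0 ∧ (a : ℕ) = (b : ℕ) + 1 then
        mu ⟨(b : ℕ) / 2, by
          have h1 := a.isLt; have h2 := finSize_two k; omega⟩
      else 0 := by
  intro k
  induction k with
  | zero =>
      intro mu a b
      exfalso
      have h0 : (finSize fun _ : Fin 0 => 2) = 0 := rfl
      have := a.isLt; omega
  | succ n ih =>
      intro mu a b
      have hrec : pairH (n+1) mu =
          dsum (H2 (mu 0)) (pairH n fun i => mu i.succ) := rfl
      rw [hrec]
      unfold dsum
      refine (rfb_apply (H2 (mu 0)) 0 0 (pairH n fun i => mu i.succ) a b).trans ?_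
      have ha2 : (a : ℕ) < 2 + (finSize fun _ : Fin n => 2) := a.isLt
      have hb2 : (b : ℕ) < 2 + (finSize fun _ : Fin n => 2) := b.isLt
      have hfs : (finSize fun _ : Fin n => 2) = n + n := finSize_two n
      by_cases ha : (a : ℕ) < 2 <;> by_cases hb : (b : ℕ) < 2
      · -- both in the H2 block
        rw [dif_pos ha, dif_pos hb]
        have hav : (a : ℕ) = 0 ∨ (a : ℕ) = 1 := by omega
        have hbv : (b : ℕ) = 0 ∨ (b : ℕ) = 1 := by omega
        rcases hav with hav | hav <;> rcases hbv with hbv | hbv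
        · have ea : (⟨(a : ℕ), ha⟩ : Fin 2) = 0 := by ext; simpa using hav
          have eb : (⟨(b : ℕ), hb⟩ : Fin 2) = 0 := by ext; simpa using hbv
          rw [ea, eb, if_neg (by omega), dif_neg (by omega)]
          simp [H2]
        · have ea : (⟨(a : ℕ), ha⟩ : Fin 2) = 0 := by ext; simpa using hav
          have eb : (⟨(b : ℕ), hb⟩ : Fin 2) = 1 := by ext; simpa using hbv
          rw [ea, eb, if_pos (by omega)]
          simp [H2]
        · have ea : (⟨(a : ℕ), ha⟩ : Fin 2) = 1 := by ext; simpa using hav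
          have eb : (⟨(b : ℕ), hb⟩ : Fin 2) = 0 := by ext; simpa using hbv
          rw [ea, eb, if_neg (by omega), dif_pos (by omega)]
          have e2 : (⟨(b : ℕ)/2, by have h1 := a.isLt; have h2 := finSize_two (n+1); omega⟩ :
              Fin (n+1)) = 0 := by ext; simp; omega
          rw [e2]
          simp [H2]
        · have ea : (⟨(a : ℕ), ha⟩ : Fin 2) = 1 := by ext; simpa using hav
          have eb : (⟨(b : ℕ), hb⟩ : Fin 2) = 1 := by ext; simpa using hbv
          rw [ea, eb, if_neg (by omega), dif_neg (by omega)]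
          simp [H2]
      · -- a in H2 block, b beyond: zero
        rw [dif_pos ha, dif_neg hb, Matrix.zero_apply, if_neg (by omega), dif_neg (by omega)]
      · rw [dif_neg ha, dif_pos hb, Matrix.zero_apply, if_neg (by omega), dif_neg (by omega)]
      · rw [dif_neg ha, dif_neg hb]
        rw [ih]
        have e1 : (((a : ℕ) - 2) % 2 = 0) ↔ ((a : ℕ) % 2 = 0) := by omega
        by_cases c1 : (a : ℕ) % 2 = 0 ∧ (b : ℕ) = (a : ℕ) + 1
        · rw [if_pos (by omega : ((a:ℕ)-2) % 2 = 0 ∧ (b:ℕ)-2 = ((a:ℕ)-2)+1),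
            if_pos c1]
        · rw [if_neg (by omega : ¬(((a:ℕ)-2) % 2 = 0 ∧ (b:ℕ)-2 = ((a:ℕ)-2)+1)),
            if_neg c1]
          by_cases c2 : (b : ℕ) % 2 = 0 ∧ (a : ℕ) = (b : ℕ) + 1
          · rw [dif_pos (by omega : ((b:ℕ)-2) % 2 = 0 ∧ (a:ℕ)-2 = ((b:ℕ)-2)+1),
              dif_pos c2]
            have hsucc : (⟨((b:ℕ)-2)/2, by omega⟩ : Fin n).succ =
                ⟨(b:ℕ)/2, by omega⟩ := by
              apply Fin.ext; simp only [Fin.val_succ]; omega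
            rw [hsucc]
          · rw [dif_neg (by omega : ¬(((b:ℕ)-2) % 2 = 0 ∧ (a:ℕ)-2 = ((b:ℕ)-2)+1)),
              dif_neg c2]

/-- the interleaving permutation -/
def sigmaEq (k : ℕ) : Fin (k+k) ≃ Fin (k+k) where
  toFun a := ⟨if (a : ℕ) % 2 = 0 then (a : ℕ)/2 else k + (a : ℕ)/2, by
    have := a.isLt; split_ifs <;> omega⟩
  invFun c := ⟨if (c : ℕ) < k then 2*(c : ℕ) else 2*((c : ℕ)-k)+1, by
    have := c.isLt; split_ifs <;> omega⟩
  left_inv := by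
    intro a; have := a.isLt; ext; simp only; split_ifs <;> omega
  right_inv := by
    intro c; have := c.isLt; ext; simp only; split_ifs <;> omega

/-- congruence by a permutation matrix realizes `submatrix` -/
lemma conj_perm {n : ℕ} (B : Matrix (Fin n) (Fin n) ℂ) (τ : Fin n ≃ Fin n) :
    B.submatrix ⇑τ ⇑τ = ((1 : Matrix (Fin n) (Fin n) ℂ).submatrix ⇑τ id) * B *
      ((1 : Matrix (Fin n) (Fin n) ℂ).submatrix ⇑τ id)ᴴ := by
  rw [conjTranspose_submatrix, conjTranspose_one]
  have h1 : (1 : Matrix (Fin n) (Fin n) ℂ).submatrix ⇑τ id * B = B.submatrix ⇑τ id := by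
    have := Matrix.submatrix_mul_equiv (1 : Matrix (Fin n) (Fin n) ℂ) B ⇑τ
      (Equiv.refl (Fin n)) id
    simpa using this
  have h2 : B.submatrix ⇑τ id * (1 : Matrix (Fin n) (Fin n) ℂ).submatrix id ⇑τ =
      B.submatrix ⇑τ ⇑τ := by
    have := Matrix.submatrix_mul_equiv B (1 : Matrix (Fin n) (Fin n) ℂ) ⇑τ
      (Equiv.refl (Fin n)) ⇑τ
    simpa using this
  rw [h1, h2]

lemma perm_mul_conj {n : ℕ} (τ : Fin n ≃ Fin n) :
    ((1 : Matrix (Fin n) (Fin n) ℂ).submatrix ⇑τ id) *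
      ((1 : Matrix (Fin n) (Fin n) ℂ).submatrix ⇑τ id)ᴴ = 1 := by
  rw [conjTranspose_submatrix, conjTranspose_one]
  have := Matrix.submatrix_mul_equiv (1 : Matrix (Fin n) (Fin n) ℂ)
    (1 : Matrix (Fin n) (Fin n) ℂ) ⇑τ (Equiv.refl (Fin n)) ⇑τ
  simp only [Equiv.coe_refl] at this
  rw [this, Matrix.one_mul, Matrix.submatrix_one_equiv]

lemma perm_unit {n : ℕ} (τ : Fin n ≃ Fin n) :
    IsUnit ((1 : Matrix (Fin n) (Fin n) ℂ).submatrix ⇑τ id) := by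
  rw [Matrix.isUnit_iff_isUnit_det]
  apply IsUnit.of_mul_eq_one ((1 : Matrix (Fin n) (Fin n) ℂ).submatrix ⇑τ id)ᴴ.det
  rw [← Matrix.det_mul, perm_mul_conj, Matrix.det_one]

lemma reindex_mul {α β : Type*} [Fintype α] [DecidableEq α] [Fintype β] [DecidableEq β] (e : α ≃ β)
    (A B : Matrix α α ℂ) :
    Matrix.reindex e e A * Matrix.reindex e e B = Matrix.reindex e e (A*B) := by
  rw [reindex_apply, reindex_apply, reindex_apply]
  exact Matrix.submatrix_mul_equiv A B ⇑e.symm e.symm ⇑e.symm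

-- the perturbed data
def dfun (μ : ℂ) (t : ℝ) (m : ℕ) : ℂ := μ + (t : ℂ) * m

def Mmat (k : ℕ) (μ : ℂ) (t : ℝ) : Matrix (Fin k) (Fin k) ℂ :=
  Matrix.of fun i j =>
    if (j : ℕ) = (i : ℕ) then dfun μ t i else if (j : ℕ) = (i : ℕ) + 1 then 1 else 0

def Smat (k : ℕ) (μ : ℂ) (t : ℝ) : Matrix (Fin k) (Fin k) ℂ :=
  Matrix.of fun i j =>
    if (i : ℕ) ≤ (j : ℕ) then
      ∏ l ∈ Finset.Ico (i : ℕ) (j : ℕ), (dfun μ t j - dfun μ t l)⁻¹ else 0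

lemma dfun_sub_ne (μ : ℂ) {t : ℝ} (ht : t ≠ 0) {m1 m2 : ℕ} (h : m1 ≠ m2) :
    dfun μ t m1 - dfun μ t m2 ≠ 0 := by
  unfold dfun
  have h1 : (m1 : ℂ) ≠ (m2 : ℂ) := by exact_mod_cast h
  have h2 : ((t : ℂ)) ≠ 0 := by exact_mod_cast ht
  have : μ + (t:ℂ) * m1 - (μ + (t:ℂ) * m2) = (t:ℂ) * ((m1 : ℂ) - m2) := by ring
  rw [this]
  exact mul_ne_zero h2 (sub_ne_zero.2 h1)

lemma Smat_step (k : ℕ) (μ : ℂ) {t : ℝ} (ht : t ≠ 0) (i j : Fin k)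
    (hik : (i : ℕ) + 1 < k) :
    Smat k μ t ⟨(i : ℕ) + 1, hik⟩ j = (dfun μ t j - dfun μ t i) * Smat k μ t i j := by
  by_cases hij : (i : ℕ) < (j : ℕ)
  · have h1 : (i : ℕ) ≤ (j : ℕ) := le_of_lt hij
    have h2 : (i : ℕ) + 1 ≤ (j : ℕ) := hij
    simp only [Smat, Matrix.of_apply, if_pos h1, if_pos h2]
    rw [Finset.prod_eq_prod_Ico_succ_bot hij]
    rw [← mul_assoc, mul_inv_cancel₀ (dfun_sub_ne μ ht (by omega)), one_mul]
  · have h3 : ¬ ((i : ℕ) + 1 ≤ (j : ℕ)) := by omega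
    simp only [Smat, Matrix.of_apply, if_neg h3]
    by_cases hji : (j : ℕ) = (i : ℕ)
    · have : dfun μ t j - dfun μ t i = 0 := by rw [hji]; ring
      rw [this, zero_mul]
    · rw [if_neg (by omega), mul_zero]

lemma Mmat_mul_Smat (k : ℕ) (μ : ℂ) {t : ℝ} (ht : t ≠ 0) :
    Mmat k μ t * Smat k μ t =
      Smat k μ t * Matrix.diagonal (fun i : Fin k => dfun μ t i) := by
  ext i j
  rw [Matrix.mul_apply, Matrix.mul_diagonal]
  have hsplit : ∀ x : Fin k, Mmat k μ t i x * Smat k μ t x j =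
      (if x = i then dfun μ t i * Smat k μ t x j else 0) +
      (if (x : ℕ) = (i : ℕ) + 1 then Smat k μ t x j else 0) := by
    intro x
    by_cases h1 : (x : ℕ) = (i : ℕ) <;> by_cases h2 : (x : ℕ) = (i : ℕ) + 1
    · omega
    · simp [Mmat, Fin.ext_iff, h1, h2]
    · simp [Mmat, Fin.ext_iff, h1, h2]
    · simp [Mmat, Fin.ext_iff, h1, h2]
  rw [Finset.sum_congr rfl (fun x _ => hsplit x), Finset.sum_add_distrib]
  rw [Finset.sum_ite_eq' Finset.univ i fun x => dfun μ t i * Smat k μ t x j]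
  rw [if_pos (Finset.mem_univ i)]
  by_cases hik : (i : ℕ) + 1 < k
  · have hcong : ∀ x : Fin k,
        (if (x : ℕ) = (i : ℕ) + 1 then Smat k μ t x j else 0) =
        (if x = (⟨(i : ℕ) + 1, hik⟩ : Fin k) then Smat k μ t x j else 0) := by
      intro x; simp [Fin.ext_iff]
    rw [Finset.sum_congr rfl fun x _ => hcong x,
      Finset.sum_ite_eq' Finset.univ _ fun x => Smat k μ t x j,
      if_pos (Finset.mem_univ _), Smat_step k μ ht i j hik]
    ring
  · have hzero : ∀ x ∈ Finset.univ,
        (if ((x : Fin k) : ℕ) = (i : ℕ) + 1 then Smat k μ t x j else 0) = 0 := by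
      intro x _; rw [if_neg (by have := x.isLt; omega)]
    rw [Finset.sum_eq_zero hzero, add_zero]
    by_cases hji : (j : ℕ) = (i : ℕ)
    · have : dfun μ t j = dfun μ t i := by rw [hji]
      rw [this]; ring
    · have hj : ¬ ((i : ℕ) ≤ (j : ℕ)) := by have := j.isLt; omega
      have : Smat k μ t i j = 0 := by
        simp only [Smat, Matrix.of_apply, if_neg hj]
      rw [this]; ring

lemma Smat_det (k : ℕ) (μ : ℂ) (t : ℝ) : (Smat k μ t).det = 1 := by
  rw [Matrix.det_of_upperTriangular]
  · apply Finset.prod_eq_one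
    intro i _
    simp only [Smat, Matrix.of_apply, if_pos (le_refl (i : ℕ))]
    rw [Finset.Ico_self, Finset.prod_empty]
  · intro i j hji
    have hlt : (j : ℕ) < (i : ℕ) := hji
    simp only [Smat, Matrix.of_apply, if_neg (by omega : ¬ ((i : ℕ) ≤ (j : ℕ)))]

lemma Mmat_eq (k : ℕ) (μ : ℂ) (t : ℝ) :
    Mmat k μ t = Jblock k μ + (t : ℂ) • Matrix.diagonal (fun i : Fin k => ((i : ℕ) : ℂ)) := by
  ext i j
  simp only [Mmat, Jblock, Matrix.add_apply, Matrix.smul_apply, Matrix.diagonal_apply,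
    Matrix.of_apply, smul_eq_mul]
  by_cases h1 : (j : ℕ) = (i : ℕ)
  · have : i = j := by ext; omega
    rw [if_pos h1, if_pos h1, if_pos this, dfun]
  · have : ¬ (i = j) := by
      intro hcon; exact h1 (by rw [hcon])
    rw [if_neg h1, if_neg h1, if_neg this, mul_zero, add_zero]

end Aux


section Aux2

open Matrix Finset

lemma one_mk {k x y : ℕ} (hx : x < k) (hy : y < k) :
    (1 : Matrix (Fin k) (Fin k) ℂ) ⟨x, hx⟩ ⟨y, hy⟩ = if x = y then 1 else 0 := by
  by_cases hxy : x = y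
  · subst hxy; rw [if_pos rfl, Matrix.one_apply_eq]
  · rw [if_neg hxy, Matrix.one_apply_ne (by intro hcon; exact hxy (congrArg Fin.val hcon))]

lemma diag_mk {k x y : ℕ} (mu : Fin k → ℂ) (hx : x < k) (hy : y < k) :
    Matrix.diagonal mu ⟨x, hx⟩ ⟨y, hy⟩ = if x = y then mu ⟨y, hy⟩ else 0 := by
  by_cases hxy : x = y
  · subst hxy; rw [if_pos rfl, Matrix.diagonal_apply_eq]
  · rw [if_neg hxy, Matrix.diagonal_apply_ne _ (by intro hcon; exact hxy (congrArg Fin.val hcon))]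

lemma pairH_reindex_apply (k : ℕ) (mu : Fin k → ℂ) (a b : Fin (k + k)) :
    Matrix.reindex (finCongr (finSize_two k)) (finCongr (finSize_two k)) (pairH k mu) a b =
      if (a : ℕ) % 2 = 0 ∧ (b : ℕ) = (a : ℕ) + 1 then 1
      else if h : (b : ℕ) % 2 = 0 ∧ (a : ℕ) = (b : ℕ) + 1 then
        mu ⟨(b : ℕ) / 2, by have := b.isLt; omega⟩
      else 0 := by
  rw [reindex_apply, submatrix_apply, pairH_apply]
  rfl

lemma pairH_perm (k : ℕ) (mu : Fin k → ℂ) :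
    Matrix.reindex (finCongr (finSize_two k)) (finCongr (finSize_two k)) (pairH k mu) =
    (Matrix.reindex finSumFinEquiv finSumFinEquiv
      (Matrix.fromBlocks 0 1 (Matrix.diagonal mu) 0)).submatrix ⇑(sigmaEq k) ⇑(sigmaEq k) := by
  ext a b
  rw [submatrix_apply, pairH_reindex_apply, rfb_apply]
  have hak := a.isLt
  have hbk := b.isLt
  have hsa : ((sigmaEq k) a : ℕ) =
      if (a : ℕ) % 2 = 0 then (a : ℕ)/2 else k + (a : ℕ)/2 := rfl
  have hsb : ((sigmaEq k) b : ℕ) =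
      if (b : ℕ) % 2 = 0 then (b : ℕ)/2 else k + (b : ℕ)/2 := rfl
  by_cases pa : (a : ℕ) % 2 = 0 <;> by_cases pb : (b : ℕ) % 2 = 0
  · -- both even : P block = 0
    rw [dif_pos (show ((sigmaEq k) a : ℕ) < k by rw [hsa, if_pos pa]; omega),
      dif_pos (show ((sigmaEq k) b : ℕ) < k by rw [hsb, if_pos pb]; omega),
      Matrix.zero_apply, if_neg (by omega), dif_neg (by omega)]
  · -- a even, b odd : Q block = 1
    rw [dif_pos (show ((sigmaEq k) a : ℕ) < k by rw [hsa, if_pos pa]; omega),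
      dif_neg (show ¬ (((sigmaEq k) b : ℕ) < k) by rw [hsb, if_neg pb]; omega),
      one_mk, hsa, hsb, if_pos pa, if_neg pb]
    have hno : ¬ ((b : ℕ) % 2 = 0 ∧ (a : ℕ) = (b : ℕ) + 1) := by omega
    rw [dif_neg hno]
    by_cases hab : (b : ℕ) = (a : ℕ) + 1
    · rw [if_pos ⟨pa, hab⟩, if_pos (by omega)]
    · rw [if_neg (by omega : ¬ ((a : ℕ) % 2 = 0 ∧ (b : ℕ) = (a : ℕ) + 1)),
        if_neg (by omega)]
  · -- a odd, b even : R block = diagonal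
    rw [dif_neg (show ¬ (((sigmaEq k) a : ℕ) < k) by rw [hsa, if_neg pa]; omega),
      dif_pos (show ((sigmaEq k) b : ℕ) < k by rw [hsb, if_pos pb]; omega),
      diag_mk, if_neg (by omega : ¬ ((a : ℕ) % 2 = 0 ∧ (b : ℕ) = (a : ℕ) + 1))]
    by_cases hab : (a : ℕ) = (b : ℕ) + 1
    · rw [dif_pos ⟨pb, hab⟩, if_pos (by rw [hsa, hsb, if_neg pa, if_pos pb]; omega)]
      congr 1
      apply Fin.ext
      show (b : ℕ) / 2 = ((sigmaEq k) b : ℕ)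
      rw [hsb, if_pos pb]
    · have hno2 : ¬ (((sigmaEq k) a : ℕ) - k = ((sigmaEq k) b : ℕ)) := by
        rw [hsa, hsb, if_neg pa, if_pos pb]; omega
      rw [dif_neg (by omega : ¬ ((b : ℕ) % 2 = 0 ∧ (a : ℕ) = (b : ℕ) + 1)),
        if_neg hno2]
  · -- both odd : T block = 0
    rw [dif_neg (show ¬ (((sigmaEq k) a : ℕ) < k) by rw [hsa, if_neg pa]; omega),
      dif_neg (show ¬ (((sigmaEq k) b : ℕ) < k) by rw [hsb, if_neg pb]; omega),
      Matrix.zero_apply, if_neg (by omega), dif_neg (by omega)]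

lemma reindex_add_smul {α β : Type*} (e : α ≃ β)
    (A B : Matrix α α ℂ) (c : ℂ) :
    Matrix.reindex e e A + c • Matrix.reindex e e B = Matrix.reindex e e (A + c • B) := by
  ext a b
  simp [reindex_apply, submatrix_apply]

lemma key_congr (k : ℕ) (μ : ℂ) {t : ℝ} (ht : t ≠ 0) :
    ∃ P : Matrix (Fin (k+k)) (Fin (k+k)) ℂ, IsUnit P ∧
      Matrix.reindex finSumFinEquiv finSumFinEquiv
          (Matrix.fromBlocks 0 1 (Mmat k μ t) 0) =
        P * Matrix.reindex (finCongr (finSize_two k)) (finCongr (finSize_two k))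
            (pairH k (fun i => dfun μ t i)) * Pᴴ := by
  set S := Smat k μ t with hSdef
  have hdet : IsUnit S.det := by rw [hSdef, Smat_det]; exact isUnit_one
  have hSS : S * S⁻¹ = 1 := Matrix.mul_nonsing_inv _ hdet
  set D := Matrix.diagonal (fun i : Fin k => dfun μ t i) with hDdef
  set F := Matrix.fromBlocks (0 : Matrix (Fin k) (Fin k) ℂ) (1 : Matrix (Fin k) (Fin k) ℂ) D (0 : Matrix (Fin k) (Fin k) ℂ) with hFdef
  set f := finSumFinEquiv (m := k) (n := k) with hfdef
  set Pb := Matrix.reindex f f (Matrix.fromBlocks ((S⁻¹)ᴴ) 0 0 S) with hPbdef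
  have hPbH : Pbᴴ = Matrix.reindex f f (Matrix.fromBlocks (S⁻¹) 0 0 (Sᴴ)) := by
    rw [hPbdef, Matrix.conjTranspose_reindex, Matrix.fromBlocks_conjTranspose]
    simp only [Matrix.conjTranspose_zero, Matrix.conjTranspose_conjTranspose]
  have hb1 : ((S⁻¹)ᴴ) * Sᴴ = (1 : Matrix (Fin k) (Fin k) ℂ) := by
    rw [← Matrix.conjTranspose_mul, hSS, Matrix.conjTranspose_one]
  have hb2 : S * D * S⁻¹ = Mmat k μ t := by
    rw [hDdef, hSdef, ← Mmat_mul_Smat k μ ht, Matrix.mul_assoc, ← hSdef, hSS,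
      Matrix.mul_one]
  have step1 : Pb * (Matrix.reindex f f F) * Pbᴴ =
      Matrix.reindex f f (Matrix.fromBlocks 0 1 (Mmat k μ t) 0) := by
    rw [hPbH, hPbdef, reindex_mul, reindex_mul]
    congr 1
    rw [hFdef, Matrix.fromBlocks_multiply, Matrix.fromBlocks_multiply]
    simp only [Matrix.mul_zero, Matrix.zero_mul, Matrix.mul_one, add_zero, zero_add,
      hb1, hb2]
  set σ := sigmaEq k with hσdef
  set Q := (1 : Matrix (Fin (k+k)) (Fin (k+k)) ℂ).submatrix ⇑σ.symm id with hQdef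
  set X := Matrix.reindex (finCongr (finSize_two k)) (finCongr (finSize_two k))
      (pairH k (fun i => dfun μ t i)) with hXdef
  have hQX : Matrix.reindex f f F = Q * X * Qᴴ := by
    rw [hXdef, pairH_perm, hQdef, ← conj_perm, Matrix.submatrix_submatrix,
      Equiv.self_comp_symm, Matrix.submatrix_id_id, hfdef, hFdef, hDdef]
  have hPbUnit : IsUnit Pb := by
    rw [Matrix.isUnit_iff_isUnit_det, hPbdef, Matrix.det_reindex_self,
      Matrix.det_fromBlocks_zero₂₁, Matrix.det_conjTranspose, Matrix.det_nonsing_inv,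
      hSdef, Smat_det, Ring.inverse_one, star_one, one_mul]
    exact isUnit_one
  refine ⟨Pb * Q, hPbUnit.mul (perm_unit σ.symm), ?_⟩
  rw [Matrix.conjTranspose_mul, ← step1, hQX]
  simp only [Matrix.mul_assoc]

end Aux2

/-- **Lemma 3.8(ii), *congruence case.**  For `k ≥ 1` and `|μ| > 1`, the matrix
`H_{2k}(μ)` belongs to the closure of the *congruence bundle of a direct sum of `k`
pairwise distinct `2 × 2` Type II blocks. -/
theorem Hblock_mem_closure_starBundle (k : ℕ) (hk : 1 ≤ k) (μ : ℂ)
    (hμ : 1 < ‖μ‖) :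
    ∃ h : finSize (fun _ : Fin k => 2) = k + k,
      Hblock k μ ∈
        closure {A : Matrix (Fin (k + k)) (Fin (k + k)) ℂ |
          ∃ (mu : Fin k → ℂ) (P : Matrix (Fin (k + k)) (Fin (k + k)) ℂ),
            IsUnit P ∧ (∀ i, 1 < ‖mu i‖) ∧
            (∀ i i', i ≠ i' → mu i ≠ mu i') ∧
            A = P * Matrix.reindex (finCongr h) (finCongr h) (pairH k mu) * Pᴴ} := by
  refine ⟨finSize_two k, ?_⟩
  have habs : (0:ℝ) < ‖μ‖ - 1 := by linarith
  set δ : ℝ := (‖μ‖ - 1) / (2 * (k + 1)) with hδdef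
  have hδpos : 0 < δ := by
    apply div_pos habs; positivity
  set E := Matrix.reindex finSumFinEquiv finSumFinEquiv
      (Matrix.fromBlocks (0 : Matrix (Fin k) (Fin k) ℂ) (0 : Matrix (Fin k) (Fin k) ℂ)
        (Matrix.diagonal fun i : Fin k => ((i:ℕ):ℂ)) (0 : Matrix (Fin k) (Fin k) ℂ))
      with hEdef
  set tseq : ℕ → ℝ := fun n => δ / (n + 1) with htseqdef
  have htpos : ∀ n, 0 < tseq n := fun n => div_pos hδpos (by positivity)
  have htle : ∀ n, tseq n ≤ δ := by
    intro n
    rw [htseqdef]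
    rw [div_le_iff₀ (by positivity : (0:ℝ) < (n:ℝ) + 1)]
    nlinarith [hδpos.le, (by positivity : (0:ℝ) ≤ (n:ℝ))]
  have hseq_eq : ∀ n, Hblock k μ + ((tseq n : ℝ) : ℂ) • E =
      Matrix.reindex finSumFinEquiv finSumFinEquiv
        (Matrix.fromBlocks 0 1 (Mmat k μ (tseq n)) 0) := by
    intro n
    rw [Hblock, hEdef, reindex_add_smul, Mmat_eq]
    apply congrArg
    rw [Matrix.fromBlocks_smul, Matrix.fromBlocks_add]
    simp only [smul_zero, add_zero, zero_add]
  have hmem : ∀ n, Hblock k μ + ((tseq n : ℝ) : ℂ) • E ∈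
      {A : Matrix (Fin (k + k)) (Fin (k + k)) ℂ |
        ∃ (mu : Fin k → ℂ) (P : Matrix (Fin (k + k)) (Fin (k + k)) ℂ),
          IsUnit P ∧ (∀ i, 1 < ‖mu i‖) ∧
          (∀ i i', i ≠ i' → mu i ≠ mu i') ∧
          A = P * Matrix.reindex (finCongr (finSize_two k)) (finCongr (finSize_two k))
              (pairH k mu) * Pᴴ} := by
    intro n
    obtain ⟨P, hP, hcong⟩ := key_congr k μ (ne_of_gt (htpos n))
    refine ⟨(fun i => dfun μ (tseq n) i), P, hP, ?_, ?_, by rw [hseq_eq n, hcong]⟩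
    · intro i
      set t := tseq n with htdef
      have h1 : ‖(((t:ℝ):ℂ) * ((i:ℕ):ℂ))‖ = t * (i:ℕ) := by
        rw [norm_mul, Complex.norm_real, Complex.norm_natCast, Real.norm_eq_abs,
          abs_of_pos (htpos n)]
      have hik : ((i:ℕ):ℝ) ≤ (k:ℝ) := by
        exact_mod_cast le_of_lt i.isLt
      have h2 : t * (i:ℕ) ≤ δ * k :=
        mul_le_mul (htle n) hik (by positivity) hδpos.le
      have h3 : δ * k < ‖μ‖ - 1 := by
        rw [hδdef, div_mul_eq_mul_div, div_lt_iff₀ (by positivity : (0:ℝ) < 2*((k:ℝ)+1))]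
        nlinarith [habs]
      have h4 : ‖μ‖ ≤
          ‖(μ + ((t:ℝ):ℂ) * ((i:ℕ):ℂ))‖ + ‖(((t:ℝ):ℂ) * ((i:ℕ):ℂ))‖ := by
        have := norm_add_le (μ + ((t:ℝ):ℂ) * ((i:ℕ):ℂ)) (-(((t:ℝ):ℂ) * ((i:ℕ):ℂ)))
        simpa using this
      show 1 < ‖(μ + ((t:ℝ):ℂ) * ((i:ℕ):ℂ))‖
      rw [h1] at h4
      linarith
    · intro i i' hii hcon
      apply hii
      have ht0 : (((tseq n):ℝ):ℂ) ≠ 0 := by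
        exact_mod_cast (ne_of_gt (htpos n))
      have h5 : (((tseq n):ℝ):ℂ) * ((i:ℕ):ℂ) = (((tseq n):ℝ):ℂ) * ((i':ℕ):ℂ) := by
        have := hcon
        unfold dfun at this
        exact add_left_cancel this
      have h6 : ((i:ℕ):ℂ) = ((i':ℕ):ℂ) := mul_left_cancel₀ ht0 h5
      have h7 : (i:ℕ) = (i':ℕ) := by exact_mod_cast h6
      exact Fin.ext h7
  apply mem_closure_of_tendsto
    (f := fun n => Hblock k μ + ((tseq n : ℝ) : ℂ) • E) (b := Filter.atTop)
  · have h0 : Filter.Tendsto tseq Filter.atTop (nhds 0) := by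
      have h := tendsto_one_div_add_atTop_nhds_zero_nat.const_mul δ
      rw [mul_zero] at h
      have : (fun n : ℕ => δ * (1 / ((n:ℝ) + 1))) = tseq := by
        funext n; rw [htseqdef, mul_one_div]
      rwa [this] at h
    have h1 : Filter.Tendsto (fun n : ℕ => ((tseq n : ℝ) : ℂ)) Filter.atTop
        (nhds 0) := by
      have := (Complex.continuous_ofReal.tendsto 0).comp h0
      simpa [Function.comp_def] using this
    have h2 := h1.smul_const E
    have h3 : Filter.Tendsto (fun n : ℕ => Hblock k μ + ((tseq n : ℝ) : ℂ) • E)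
        Filter.atTop (nhds (Hblock k μ + (0:ℂ) • E)) :=
      Filter.Tendsto.add tendsto_const_nhds h2
    simpa using h3
  · exact Filter.Eventually.of_forall hmem
end
end

section
/- (Theorem 4.1(b2): the generic *congruence bundles are mutually non-overlapping.) For every n ≥ 1 and all integers ℓ_1, ℓ_2 with 0 ≤ ℓ_1, ℓ_2 ≤ ⌊n/2⌋ and ℓ_1 ≠ ℓ_2, the closure of 𝒢_{ℓ_1} is disjoint from 𝒢_{ℓ_2}, i.e., closure(𝒢_{ℓ_1}) ∩ 𝒢_{ℓ_2} = ∅. In particular, the closures of the ⌊n/2⌋ + 1 generic *congruence bundles are pairwise different. -/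
open Matrix

noncomputable section

/-- The generic *congruence bundle
`𝒢_ℓ = ℬ*(H_2(μ_1) ⊕ ⋯ ⊕ H_2(μ_ℓ) ⊕ diag(α_1, …, α_{n-2ℓ})) ⊆ ℂ^{n×n}`: all matrices
`P (H_2(μ_1) ⊕ ⋯ ⊕ H_2(μ_ℓ) ⊕ diag(α_1, …, α_{n-2ℓ})) Pᴴ` with `P` invertible,
`|μ_i| > 1` pairwise distinct, `|α_j| = 1` with `α_j² ≠ α_{j'}²` for `j ≠ j'`. -/
def genStar (n ℓ : ℕ) : Set (Matrix (Fin n) (Fin n) ℂ) :=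
  {A | ∃ (h : finSize (fun _ : Fin ℓ => 2) + (n - 2 * ℓ) = n)
      (mu : Fin ℓ → ℂ) (a : Fin (n - 2 * ℓ) → ℂ) (P : Matrix (Fin n) (Fin n) ℂ),
      IsUnit P ∧ (∀ i, 1 < ‖mu i‖) ∧ (∀ i i', i ≠ i' → mu i ≠ mu i') ∧
      (∀ j, ‖a j‖ = 1) ∧ (∀ j j', j ≠ j' → a j ^ 2 ≠ a j' ^ 2) ∧
      A = P * Matrix.reindex (finCongr h) (finCongr h)
            (dsum (pairH ℓ mu) (Matrix.diagonal a)) * Pᴴ}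

/-- The complex absolute value, as an `AbsoluteValue` (equal to the norm). -/
def Complex.abs : AbsoluteValue ℂ ℝ := NormedField.toAbsoluteValue ℂ

theorem Complex.abs_def' (z : ℂ) : Complex.abs z = ‖z‖ := rfl

theorem Complex.abs_conj (z : ℂ) : Complex.abs ((starRingEnd ℂ) z) = Complex.abs z :=
  Complex.norm_conj z

theorem Complex.abs_ofReal (r : ℝ) : Complex.abs (r : ℂ) = |r| := by
  simp [Complex.abs_def']

theorem Complex.sq_abs (z : ℂ) : Complex.abs z ^ 2 = Complex.normSq z := Complex.sq_norm z

theorem Complex.continuous_abs : Continuous Complex.abs := continuous_norm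

lemma finSize_const_two (q : ℕ) : finSize (fun _ : Fin q => 2) = 2 * q := by
  induction q with
  | zero => rfl
  | succ q ih => show 2 + finSize (fun _ : Fin q => 2) = 2 * (q+1); rw [ih]; ring

lemma dsum_conjTranspose {m n : ℕ} (A : Matrix (Fin m) (Fin m) ℂ) (B : Matrix (Fin n) (Fin n) ℂ) :
    (dsum A B)ᴴ = dsum Aᴴ Bᴴ := by
  simp [dsum, conjTranspose_submatrix, Matrix.fromBlocks_conjTranspose]

lemma dsum_sub {m n : ℕ} (A A' : Matrix (Fin m) (Fin m) ℂ) (B B' : Matrix (Fin n) (Fin n) ℂ) :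
    dsum A B - dsum A' B' = dsum (A - A') (B - B') := by
  ext i j
  cases hi : finSumFinEquiv.symm i <;> cases hj : finSumFinEquiv.symm j <;>
    simp [dsum, Matrix.fromBlocks, hi, hj]

lemma dsum_smul {m n : ℕ} (z : ℂ) (A : Matrix (Fin m) (Fin m) ℂ) (B : Matrix (Fin n) (Fin n) ℂ) :
    z • dsum A B = dsum (z • A) (z • B) := by
  ext i j
  cases hi : finSumFinEquiv.symm i <;> cases hj : finSumFinEquiv.symm j <;>
    simp [dsum, Matrix.fromBlocks, hi, hj]

lemma det_dsum {m n : ℕ} (A : Matrix (Fin m) (Fin m) ℂ) (B : Matrix (Fin n) (Fin n) ℂ) :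
    (dsum A B).det = A.det * B.det := by
  simp [dsum, Matrix.det_fromBlocks_zero₂₁]

local notation "conj'" => starRingEnd ℂ

lemma det_H2_pencil (μ z : ℂ) :
    (H2 μ - z • (H2 μ)ᴴ).det = (1 - z * conj' μ) * (z - μ) := by
  simp [H2, Matrix.det_fin_two, Matrix.conjTranspose_apply]
  ring

lemma det_pairH_pencil (r : ℕ) (mu : Fin r → ℂ) (z : ℂ) :
    (pairH r mu - z • (pairH r mu)ᴴ).det
      = ∏ i, ((1 - z * conj' (mu i)) * (z - mu i)) := by
  induction r with
  | zero =>
      haveI : IsEmpty (Fin (finSize fun _ : Fin 0 => 2)) :=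
        (by exact Fin.isEmpty' : IsEmpty (Fin 0))
      simp [Matrix.det_isEmpty]
  | succ r ih =>
      show (dsum (H2 (mu 0)) (pairH r (fun i => mu i.succ)) -
        z • (dsum (H2 (mu 0)) (pairH r (fun i => mu i.succ)))ᴴ).det = _
      rw [dsum_conjTranspose, dsum_smul, dsum_sub, det_dsum, det_H2_pencil,
        ih (fun i => mu i.succ), Fin.prod_univ_succ]

lemma genStar_le {n ℓ : ℕ} {B : Matrix (Fin n) (Fin n) ℂ} (hB : B ∈ genStar n ℓ) :
    2 * ℓ ≤ n := by
  obtain ⟨h, -⟩ := hB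
  rw [finSize_const_two] at h
  omega

/-- Data extracted from membership in a generic bundle: the pencil
`z ↦ det (B - z Bᴴ)` factors with explicit roots. -/
structure PencilData (n ℓ : ℕ) (B : Matrix (Fin n) (Fin n) ℂ) where
  c : ℂ
  root : Fin ℓ ⊕ Fin ℓ ⊕ Fin (n - 2 * ℓ) → ℂ
  hc : c ≠ 0
  habs : Complex.abs c = Complex.abs B.det
  hinj : Function.Injective root
  hgt : ∀ i, 1 < Complex.abs (root (.inl i))
  hlt : ∀ i, Complex.abs (root (.inr (.inl i))) < 1
  hone : ∀ j, Complex.abs (root (.inr (.inr j))) = 1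
  hpair : ∀ i, root (.inr (.inl i)) = (starRingEnd ℂ (root (.inl i)))⁻¹
  hfac : ∀ z : ℂ, (B - z • Bᴴ).det = c * ∏ s, (z - root s)

lemma pencilData_of_mem {n ℓ : ℕ} {B : Matrix (Fin n) (Fin n) ℂ} (hB : B ∈ genStar n ℓ) :
    Nonempty (PencilData n ℓ B) := by
  obtain ⟨h, mu, a, P, hP, hmu, hmud, ha, had, rfl⟩ := hB
  set C₀ : Matrix (Fin (finSize (fun _ : Fin ℓ => 2) + (n - 2*ℓ)))
      (Fin (finSize (fun _ : Fin ℓ => 2) + (n - 2*ℓ))) ℂ :=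
    dsum (pairH ℓ mu) (Matrix.diagonal a) with hC₀
  set M := Matrix.reindex (finCongr h) (finCongr h) C₀ with hM
  have hmu0 : ∀ i, mu i ≠ 0 := fun i hz => by
    have := hmu i; rw [hz] at this; simp at this; exact absurd this (by norm_num)

  have ha0 : ∀ j, a j ≠ 0 := fun j hz => by
    have := ha j; rw [hz] at this; simp at this
  -- the pencil of the full matrix
  have key : ∀ z : ℂ, (P * M * Pᴴ - z • (P * M * Pᴴ)ᴴ).det
      = P.det * conj' P.det *
        ((∏ i, ((1 - z * conj' (mu i)) * (z - mu i))) * ∏ j, (a j - z * conj' (a j))) := by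
    intro z
    have h1 : (P * M * Pᴴ)ᴴ = P * Mᴴ * Pᴴ := by
      rw [conjTranspose_mul, conjTranspose_mul, conjTranspose_conjTranspose, mul_assoc]
    have h2 : P * M * Pᴴ - z • (P * M * Pᴴ)ᴴ = P * (M - z • Mᴴ) * Pᴴ := by
      rw [h1]
      rw [Matrix.mul_sub, Matrix.sub_mul]
      congr 1
      rw [Matrix.mul_smul, Matrix.smul_mul]
    rw [h2, Matrix.det_mul, Matrix.det_mul, Matrix.det_conjTranspose]
    have h3 : Mᴴ = Matrix.reindex (finCongr h) (finCongr h) C₀ᴴ := by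
      rw [hM]; ext i j; simp [Matrix.conjTranspose_apply]
    have h4 : M - z • Mᴴ = Matrix.reindex (finCongr h) (finCongr h) (C₀ - z • C₀ᴴ) := by
      rw [h3, hM]; ext i j; simp
    rw [h4, Matrix.det_reindex_self]
    have h5 : C₀ - z • C₀ᴴ =
        dsum (pairH ℓ mu - z • (pairH ℓ mu)ᴴ)
          (Matrix.diagonal a - z • (Matrix.diagonal a)ᴴ) := by
      rw [hC₀, dsum_conjTranspose, dsum_smul, dsum_sub]
    rw [h5, det_dsum, det_pairH_pencil]
    have h6 : (Matrix.diagonal a - z • (Matrix.diagonal a)ᴴ).det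
        = ∏ j, (a j - z * conj' (a j)) := by
      rw [Matrix.diagonal_conjTranspose]
      have : z • Matrix.diagonal (star a) = Matrix.diagonal fun j => z * conj' (a j) := by
        ext i j; by_cases hij : i = j <;> simp [Matrix.diagonal, hij, Pi.star_apply]
      rw [this, Matrix.diagonal_sub, Matrix.det_diagonal]
    rw [h6, show star P.det = conj' P.det from rfl]
    ring
  refine ⟨⟨P.det * conj' P.det * ((∏ i, (- conj' (mu i))) * ∏ j, (- conj' (a j))),
    Sum.elim mu (Sum.elim (fun i => (conj' (mu i))⁻¹) (fun j => (a j)^2)),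
    ?hc, ?habs, ?hinj, ?hgt, ?hlt, ?hone, ?hpair, ?hfac⟩⟩
  case hgt => intro i; simpa using (show 1 < Complex.abs (mu i) from hmu i)
  case hlt =>
    intro i
    have h1 := hmu i
    simp only [Sum.elim_inr, Sum.elim_inl, map_inv₀, Complex.abs_conj]
    rw [inv_lt_one_iff₀]
    right; exact h1
  case hone => intro j; simp [map_pow, (show Complex.abs (a j) = 1 from ha j)]
  case hpair => intro i; rfl
  case hc =>
    have hPd : P.det ≠ 0 := (Matrix.isUnit_iff_isUnit_det P).mp hP |>.ne_zero
    refine mul_ne_zero (mul_ne_zero hPd ?_) (mul_ne_zero ?_ ?_)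
    · simpa using hPd
    · rw [Finset.prod_ne_zero_iff]
      intro i _; simpa using hmu0 i
    · rw [Finset.prod_ne_zero_iff]
      intro j _; simpa using ha0 j
  case hinj =>
    have abs_inl : ∀ i, 1 < Complex.abs (mu i) := hmu
    have abs_mid : ∀ i, Complex.abs ((conj' (mu i))⁻¹) < 1 := by
      intro i
      rw [map_inv₀, Complex.abs_conj, inv_lt_one_iff₀]
      right; exact hmu i
    have abs_sq : ∀ j, Complex.abs ((a j)^2) = 1 := by
      intro j; rw [map_pow, (show Complex.abs (a j) = 1 from ha j), one_pow]
    rintro (i|i|j) (i'|i'|j') heq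
    · simp only [Sum.elim_inl] at heq
      by_contra hne'; exact hmud _ _ (fun hh => hne' (by rw [hh])) heq
    · exfalso; simp only [Sum.elim_inl, Sum.elim_inr] at heq
      have := abs_mid i'; rw [← heq] at this; exact absurd (abs_inl i) (by linarith)
    · exfalso; simp only [Sum.elim_inl, Sum.elim_inr] at heq
      have := abs_sq j'; rw [← heq] at this; exact absurd (abs_inl i) (by rw [this]; simp)
    · exfalso; simp only [Sum.elim_inl, Sum.elim_inr] at heq
      have := abs_mid i; rw [heq] at this; exact absurd (abs_inl i') (by linarith)
    · simp only [Sum.elim_inr, Sum.elim_inl] at heq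
      have : mu i = mu i' := by
        have := inv_injective heq
        exact (starRingEnd ℂ).injective this
      by_contra hne'; exact hmud _ _ (fun hh => hne' (by rw [hh])) this
    · exfalso; simp only [Sum.elim_inr, Sum.elim_inl] at heq
      have := abs_sq j'; rw [← heq] at this
      have h2 := abs_mid i; rw [this] at h2; linarith
    · exfalso; simp only [Sum.elim_inl, Sum.elim_inr] at heq
      have := abs_sq j; rw [heq] at this; exact absurd (abs_inl i') (by rw [this]; simp)
    · exfalso; simp only [Sum.elim_inr, Sum.elim_inl] at heq
      have := abs_sq j; rw [heq] at this
      have h2 := abs_mid i'; rw [this] at h2; linarith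
    · simp only [Sum.elim_inr] at heq
      by_contra hne'; exact had _ _ (fun hh => hne' (by rw [hh])) heq
  case hfac =>
    intro z
    rw [key z]
    rw [Fintype.prod_sum_type]
    simp only [Sum.elim_inl, Sum.elim_inr]
    rw [Fintype.prod_sum_type]
    simp only [Sum.elim_inl, Sum.elim_inr]
    have e1 : ∀ i : Fin ℓ, (1 - z * conj' (mu i)) * (z - mu i)
        = (- conj' (mu i)) * ((z - mu i) * (z - (conj' (mu i))⁻¹)) := by
      intro i
      have hc0 : conj' (mu i) ≠ 0 := by simpa using hmu0 i
      field_simp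
      ring
    have e2 : ∀ j, (a j - z * conj' (a j)) = (- conj' (a j)) * (z - (a j)^2) := by
      intro j
      have h1 : a j * conj' (a j) = 1 := by
        rw [Complex.mul_conj]
        norm_cast
        rw [← Complex.sq_abs, (show Complex.abs (a j) = 1 from ha j), one_pow]
      calc a j - z * conj' (a j) = (a j * conj' (a j)) * a j - z * conj' (a j) := by
            rw [h1, one_mul]
        _ = (- conj' (a j)) * (z - (a j)^2) := by ring
    rw [Finset.prod_congr rfl (fun i _ => e1 i), Finset.prod_congr rfl (fun j _ => e2 j),
      Finset.prod_mul_distrib, Finset.prod_mul_distrib, Finset.prod_mul_distrib]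
    ring
  case habs =>
    have h0 := key 0
    have hB0 : P * M * Pᴴ - (0:ℂ) • (P * M * Pᴴ)ᴴ = P * M * Pᴴ := by
      rw [zero_smul, sub_zero]
    rw [hB0] at h0
    rw [h0]
    simp only [_root_.map_mul, map_prod]
    simp [Complex.abs_conj, Complex.abs_def', ha]

lemma exists_pos_le {ι : Type*} [Fintype ι] (f : ι → ℝ) (hf : ∀ i, 0 < f i) :
    ∃ ε : ℝ, 0 < ε ∧ ε ≤ 1/2 ∧ ∀ i, ε ≤ f i := by
  rcases isEmpty_or_nonempty ι with h|h
  · exact ⟨1/2, by norm_num, le_refl _, fun i => (h.false i).elim⟩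
  · refine ⟨min (1/2) (Finset.univ.inf' Finset.univ_nonempty f), ?_,
      min_le_left _ _, ?_⟩
    · refine lt_min (by norm_num) ?_
      rw [Finset.lt_inf'_iff]
      exact fun i _ => hf i
    · intro i
      exact le_trans (min_le_right _ _) (Finset.inf'_le f (Finset.mem_univ i))

lemma partner_close {r : ℂ} {e : ℝ} (he : 0 < e) (he2 : e ≤ 1/2) (hr0 : r ≠ 0)
    (hlow : 1 - e ≤ Complex.abs r) (hhigh : Complex.abs r ≤ 1 + e) :
    Complex.abs (r - ((starRingEnd ℂ) r)⁻¹) ≤ 4*e := by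
  set x := Complex.abs r with hx
  have hx0 : 0 < x := by
    rw [hx]; exact AbsoluteValue.pos _ hr0
  have hconj : (starRingEnd ℂ) r = ((Complex.normSq r : ℂ)) * r⁻¹ := by
    field_simp
    rw [mul_comm]
    exact Complex.mul_conj r
  have hns : (Complex.normSq r : ℝ) = x^2 := by rw [← Complex.sq_abs]
  have hinv : ((starRingEnd ℂ) r)⁻¹ = r * ((x:ℂ)^2)⁻¹ := by
    rw [hconj, mul_inv, inv_inv, mul_comm]
    congr 2
    push_cast [hns]
    ring
  have key : r - ((starRingEnd ℂ) r)⁻¹ = r * (1 - ((x:ℂ)^2)⁻¹) := by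
    rw [hinv]; ring
  rw [key, _root_.map_mul]
  have : (1 - ((x:ℂ)^2)⁻¹) = ((1 - (x^2)⁻¹ : ℝ) : ℂ) := by push_cast; ring
  rw [this, Complex.abs_ofReal, ← hx]
  have hxx : x * (x^2)⁻¹ = x⁻¹ := by field_simp
  have hinv1 : x * x⁻¹ = 1 := mul_inv_cancel₀ (ne_of_gt hx0)
  rw [show x * |1 - (x ^ 2)⁻¹| = |x * (1 - (x^2)⁻¹)| by
    rw [abs_mul, abs_of_pos hx0]]
  rw [mul_sub, mul_one, hxx, abs_le]
  constructor <;> nlinarith [sq_nonneg x, sq_nonneg (x - 1), sq_nonneg (x + 1)]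

lemma genStar_closure_main {n ℓ₁ ℓ₂ : ℕ} {A : Matrix (Fin n) (Fin n) ℂ}
    (hA2 : A ∈ genStar n ℓ₂) (hA1 : A ∈ closure (genStar n ℓ₁)) : ℓ₁ = ℓ₂ := by
  obtain ⟨dA⟩ := pencilData_of_mem hA2
  have hn2 : 2 * ℓ₂ ≤ n := genStar_le hA2
  set zf := dA.root with hzf
  have hD : 0 < Complex.abs A.det := by
    rw [← dA.habs]; exact AbsoluteValue.pos _ dA.hc
  set D := Complex.abs A.det with hDdef
  -- choose ε
  obtain ⟨ε, hε, hε2, hεle⟩ := exists_pos_le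
    (ι := ((Fin ℓ₂ ⊕ Fin ℓ₂ ⊕ Fin (n - 2*ℓ₂)) × (Fin ℓ₂ ⊕ Fin ℓ₂ ⊕ Fin (n - 2*ℓ₂)))
        ⊕ (Fin ℓ₂ ⊕ Fin ℓ₂ ⊕ Fin (n - 2*ℓ₂)))
    (fun x => match x with
      | .inl (s, t) => if h : s = t then 1 else Complex.abs (zf s - zf t) / 12
      | .inr (.inl i) => Complex.abs (zf (.inl i)) - 1
      | .inr (.inr (.inl i)) => 1 - Complex.abs (zf (.inr (.inl i)))
      | .inr (.inr (.inr _)) => 1)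
    (by
      rintro (⟨s, t⟩ | (i | i | j))
      · by_cases h : s = t
        · simp [h]
        · simp only [h, dif_neg, not_false_iff]
          have : zf s ≠ zf t := fun hc => h (dA.hinj hc)
          have : 0 < Complex.abs (zf s - zf t) := by
            rw [AbsoluteValue.pos_iff]
            exact sub_ne_zero.mpr this
          linarith
      · have := dA.hgt i; simp only; linarith
      · have := dA.hlt i; simp only; linarith
      · norm_num)
  have hsep : ∀ s t, s ≠ t → 12 * ε ≤ Complex.abs (zf s - zf t) := by
    intro s t hst
    have := hεle (.inl (s, t))
    simp only [hst, dif_neg, not_false_iff] at this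
    linarith
  have hgap1 : ∀ i, 1 + ε ≤ Complex.abs (zf (.inl i)) := by
    intro i; have := hεle (.inr (.inl i)); simp only at this; linarith
  have hgap2 : ∀ i, Complex.abs (zf (.inr (.inl i))) ≤ 1 - ε := by
    intro i; have := hεle (.inr (.inr (.inl i))); simp only at this; linarith
  -- the open set U
  set U : Set (Matrix (Fin n) (Fin n) ℂ) :=
    {B | D/2 < Complex.abs B.det} ∩
      ⋂ t, {B | Complex.abs ((B - zf t • Bᴴ).det) < D/2 * ε^n} with hU
  have hUopen : IsOpen U := by
    apply IsOpen.inter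
    · exact isOpen_lt continuous_const (Complex.continuous_abs.comp continuous_id.matrix_det)
    · refine isOpen_iInter_of_finite fun t => ?_
      exact isOpen_lt
        (Complex.continuous_abs.comp (show Continuous fun B : Matrix (Fin n) (Fin n) ℂ =>
          (B - zf t • Bᴴ).det from (continuous_id.sub
          ((continuous_const : Continuous fun _ : Matrix (Fin n) (Fin n) ℂ => zf t).smul
            continuous_id.matrix_conjTranspose)).matrix_det))
        continuous_const
  have hAU : A ∈ U := by
    constructor
    · simp only [Set.mem_setOf_eq]; linarith
    · refine Set.mem_iInter.mpr fun t => ?_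
      simp only [Set.mem_setOf_eq]
      have h0 : (A - zf t • Aᴴ).det = 0 := by
        rw [dA.hfac (zf t)]
        have : (zf t - zf t) = 0 := sub_self _
        rw [Finset.prod_eq_zero (Finset.mem_univ t) (by rw [this]), mul_zero]
      rw [h0]
      simp only [map_zero]
      positivity
  obtain ⟨B, hBU, hBS⟩ := mem_closure_iff.mp hA1 U hUopen hAU
  obtain ⟨dB⟩ := pencilData_of_mem hBS
  have hn1 : 2 * ℓ₁ ≤ n := genStar_le hBS
  have cardT₁ : Fintype.card (Fin ℓ₁ ⊕ Fin ℓ₁ ⊕ Fin (n - 2*ℓ₁)) = n := by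
    simp only [Fintype.card_sum, Fintype.card_fin]; omega
  have cardT₂ : Fintype.card (Fin ℓ₂ ⊕ Fin ℓ₂ ⊕ Fin (n - 2*ℓ₂)) = n := by
    simp only [Fintype.card_sum, Fintype.card_fin]; omega
  have hcB : D/2 < Complex.abs dB.c := by rw [dB.habs]; exact hBU.1
  have hBt : ∀ t, Complex.abs ((B - zf t • Bᴴ).det) < D/2 * ε^n := by
    intro t
    exact Set.mem_iInter.mp hBU.2 t
  -- step 1 : near each z_t there is a root of B's pencil
  have step1 : ∀ t, ∃ s, Complex.abs (zf t - dB.root s) < ε := by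
    intro t
    by_contra hcon
    push_neg at hcon
    have hge : D/2 * ε^n ≤ Complex.abs ((B - zf t • Bᴴ).det) := by
      rw [dB.hfac (zf t), _root_.map_mul, map_prod]
      have h1 : ε ^ n ≤ ∏ s, Complex.abs (zf t - dB.root s) := by
        have hpc : (∏ _s : Fin ℓ₁ ⊕ Fin ℓ₁ ⊕ Fin (n - 2*ℓ₁), ε) = ε ^ n := by
          rw [Finset.prod_const, Finset.card_univ, cardT₁]
        rw [← hpc]
        exact Finset.prod_le_prod (fun _ _ => le_of_lt hε) (fun s _ => hcon s)
      have h2 : (0:ℝ) ≤ ε ^ n := by positivity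
      calc D/2 * ε^n ≤ Complex.abs dB.c * ε^n := by
            apply mul_le_mul_of_nonneg_right (le_of_lt hcB) h2
        _ ≤ Complex.abs dB.c * ∏ s, Complex.abs (zf t - dB.root s) := by
            apply mul_le_mul_of_nonneg_left h1 (AbsoluteValue.nonneg _ _)
    exact absurd (hBt t) (not_lt.mpr hge)
  choose F hF using step1
  have hFinj : Function.Injective F := by
    intro t t' heq
    by_contra hne'
    have h1 := hF t
    have h2 := hF t'
    rw [heq] at h1
    have tri : Complex.abs (zf t - zf t') ≤
        Complex.abs (zf t - dB.root (F t')) + Complex.abs (dB.root (F t') - zf t') :=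
      AbsoluteValue.sub_le Complex.abs (zf t) (dB.root (F t')) (zf t')
    have h4 : Complex.abs (dB.root (F t') - zf t') < ε := by
      rw [AbsoluteValue.map_sub]; exact h2
    have := hsep t t' hne'
    linarith
  have hFbij : Function.Bijective F :=
    (Fintype.bijective_iff_injective_and_card F).mpr ⟨hFinj, by rw [cardT₂, cardT₁]⟩
  have huniq : ∀ t s, Complex.abs (zf t - dB.root s) < 6 * ε → s = F t := by
    intro t s hs
    obtain ⟨t', rfl⟩ := hFbij.2 s
    by_contra hne'
    have htt' : t ≠ t' := fun hc => hne' (by rw [hc])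
    have h2 := hF t'
    have tri : Complex.abs (zf t - zf t') ≤
        Complex.abs (zf t - dB.root (F t')) + Complex.abs (dB.root (F t') - zf t') := by
      exact AbsoluteValue.sub_le Complex.abs _ _ _
    have h3 : Complex.abs (dB.root (F t') - zf t') = Complex.abs (zf t' - dB.root (F t')) := by
      rw [← AbsoluteValue.map_neg Complex.abs]; congr 1; ring
    have := hsep t t' htt'
    rw [h3] at tri
    linarith
  -- μ-class preservation : ℓ₂ ≤ ℓ₁
  have hmu_cls : ∀ i : Fin ℓ₂, ∃ i₁ : Fin ℓ₁, F (.inl i) = .inl i₁ := by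
    intro i
    have h1 := hF (.inl i)
    have h2 := hgap1 i
    have hroot : 1 < Complex.abs (dB.root (F (.inl i))) := by
      have tri : Complex.abs (zf (.inl i)) ≤
          Complex.abs (zf (.inl i) - dB.root (F (.inl i))) +
            Complex.abs (dB.root (F (.inl i))) := by
        have := AbsoluteValue.sub_le Complex.abs (zf (.inl i)) (dB.root (F (.inl i))) 0
        simpa using this
      linarith
    rcases hFs : F (.inl i) with i₁ | i₁ | j₁
    · exact ⟨i₁, rfl⟩
    · exfalso; rw [hFs] at hroot; have := dB.hlt i₁; linarith
    · exfalso; rw [hFs] at hroot; have := dB.hone j₁; linarith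
  choose G hG using hmu_cls
  have hGinj : Function.Injective G := by
    intro i i' heq
    have : F (.inl i) = F (.inl i') := by rw [hG i, hG i', heq]
    have := hFinj this
    exact Sum.inl.inj this
  have hle1 : ℓ₂ ≤ ℓ₁ := by
    have := Fintype.card_le_of_injective G hGinj
    simpa using this
  -- α-class preservation : n - 2ℓ₂ ≤ n - 2ℓ₁
  have halpha_cls : ∀ j : Fin (n - 2*ℓ₂), ∃ j₁ : Fin (n - 2*ℓ₁),
      F (.inr (.inr j)) = .inr (.inr j₁) := by
    intro j
    set t : Fin ℓ₂ ⊕ Fin ℓ₂ ⊕ Fin (n - 2*ℓ₂) := .inr (.inr j) with ht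
    have h1 := hF t
    have ht1 : Complex.abs (zf t) = 1 := dA.hone j
    have hhigh : Complex.abs (dB.root (F t)) ≤ 1 + ε := by
      have tri := AbsoluteValue.sub_le Complex.abs (dB.root (F t)) (zf t) 0
      simp only [sub_zero] at tri
      have h3 : Complex.abs (dB.root (F t) - zf t) = Complex.abs (zf t - dB.root (F t)) := by
        rw [← AbsoluteValue.map_neg Complex.abs]; congr 1; ring
      rw [h3] at tri
      linarith
    have hlow : 1 - ε ≤ Complex.abs (dB.root (F t)) := by
      have tri := AbsoluteValue.sub_le Complex.abs (zf t) (dB.root (F t)) 0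
      simp only [sub_zero] at tri
      linarith
    rcases hFs : F t with i₁ | i₁ | j₁
    · -- root has modulus > 1 ; its partner is also in the ball : contradiction
      exfalso
      have hr0 : dB.root (Sum.inl i₁) ≠ 0 := by
        intro hc
        have := dB.hgt i₁
        rw [hc] at this; simp at this; linarith
      have hpc : Complex.abs (dB.root (Sum.inl i₁) -
          ((starRingEnd ℂ) (dB.root (Sum.inl i₁)))⁻¹) ≤ 4*ε := by
        apply partner_close hε hε2 hr0
        · rw [← hFs]; exact hlow
        · rw [← hFs]; exact hhigh
      have hps : dB.root (Sum.inr (Sum.inl i₁)) =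
          ((starRingEnd ℂ) (dB.root (Sum.inl i₁)))⁻¹ := dB.hpair i₁
      have hball : Complex.abs (zf t - dB.root (Sum.inr (Sum.inl i₁))) < 6 * ε := by
        rw [hps]
        have tri := AbsoluteValue.sub_le Complex.abs (zf t) (dB.root (Sum.inl i₁))
          (((starRingEnd ℂ) (dB.root (Sum.inl i₁)))⁻¹)
        have h1' : Complex.abs (zf t - dB.root (Sum.inl i₁)) < ε := by rw [← hFs]; exact h1
        linarith
      have huq := huniq t _ hball
      rw [hFs] at huq
      exact Sum.inr_ne_inl huq
    · -- root has modulus < 1 ; its partner is also in the ball : contradiction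
      exfalso
      set r := dB.root (Sum.inr (Sum.inl i₁)) with hr
      have hr0 : r ≠ 0 := by
        intro hc
        have : (0:ℝ) < 1 - ε := by linarith
        rw [hFs, ← hr, hc] at hlow
        simp at hlow
        linarith
      have hy : dB.root (Sum.inl i₁) = ((starRingEnd ℂ) r)⁻¹ := by
        have hp := dB.hpair i₁
        rw [← hr] at hp
        rw [hp]
        rw [map_inv₀, Complex.conj_conj, inv_inv]
      have hpc : Complex.abs (r - ((starRingEnd ℂ) r)⁻¹) ≤ 4*ε := by
        apply partner_close hε hε2 hr0
        · rw [hr, ← hFs]; exact hlow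
        · rw [hr, ← hFs]; exact hhigh
      have hball : Complex.abs (zf t - dB.root (Sum.inl i₁)) < 6 * ε := by
        rw [hy]
        have tri := AbsoluteValue.sub_le Complex.abs (zf t) r (((starRingEnd ℂ) r)⁻¹)
        have h1' : Complex.abs (zf t - r) < ε := by rw [hr, ← hFs]; exact h1
        linarith
      have huq := huniq t _ hball
      rw [hFs] at huq
      exact Sum.inl_ne_inr huq
    · exact ⟨j₁, rfl⟩
  choose H hH using halpha_cls
  have hHinj : Function.Injective H := by
    intro j j' heq
    have : F (.inr (.inr j)) = F (.inr (.inr j')) := by rw [hH j, hH j', heq]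
    have := hFinj this
    exact Sum.inr.inj (Sum.inr.inj this)
  have hle2 : n - 2*ℓ₂ ≤ n - 2*ℓ₁ := by
    have := Fintype.card_le_of_injective H hHinj
    simpa using this
  omega

lemma genStar_nonempty (n ℓ : ℕ) (h2 : ℓ ≤ n / 2) : (genStar n ℓ).Nonempty := by
  have h2' : 2 * ℓ ≤ n := by omega
  have h : finSize (fun _ : Fin ℓ => 2) + (n - 2 * ℓ) = n := by
    rw [finSize_const_two]; omega
  set mu : Fin ℓ → ℂ := fun i => (((i : ℕ) + 2 : ℕ) : ℂ) with hmu_def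
  set a : Fin (n - 2*ℓ) → ℂ := fun j =>
    ⟨(1 - ((j:ℝ)+1)^2)/(1+((j:ℝ)+1)^2), 2*((j:ℝ)+1)/(1+((j:ℝ)+1)^2)⟩ with ha_def
  have ht_pos : ∀ j : Fin (n - 2*ℓ), (0:ℝ) < (j:ℝ)+1 := fun j => by positivity
  have ht_den : ∀ j : Fin (n - 2*ℓ), (1+((j:ℝ)+1)^2) ≠ 0 := fun j => by positivity
  refine ⟨1 * Matrix.reindex (finCongr h) (finCongr h)
      (dsum (pairH ℓ mu) (Matrix.diagonal a)) * (1:Matrix (Fin n) (Fin n) ℂ)ᴴ,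
    h, mu, a, 1, isUnit_one, ?_, ?_, ?_, ?_, rfl⟩
  · intro i
    rw [hmu_def]
    simp only [Complex.norm_natCast]
    have : (1:ℝ) < ((i:ℕ) + 2 : ℕ) := by
      push_cast; linarith [Nat.cast_nonneg (α := ℝ) (i:ℕ)]
    exact this
  · intro i i' hne heq
    apply hne
    rw [hmu_def] at heq
    have := Nat.cast_injective (R := ℂ) heq
    omega
  · intro j
    rw [ha_def]
    have hns : Complex.normSq ⟨(1 - ((j:ℝ)+1)^2)/(1+((j:ℝ)+1)^2),
        2*((j:ℝ)+1)/(1+((j:ℝ)+1)^2)⟩ = 1 := by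
      rw [Complex.normSq_mk]
      field_simp
      ring
    rw [Complex.norm_def, hns, Real.sqrt_one]
  · intro j j' hne heq
    apply hne
    have := sq_eq_sq_iff_eq_or_eq_neg.mp heq
    rcases this with heq' | heq'
    · have hre := congrArg Complex.re heq'
      rw [ha_def] at hre
      simp only at hre
      have h1 := ht_den j
      have h2 := ht_den j'
      have ht1 := ht_pos j
      have ht2 := ht_pos j'
      field_simp at hre
      have : ((j:ℝ)+1) = ((j':ℝ)+1) := by nlinarith
      have : (j:ℝ) = (j':ℝ) := by linarith
      exact_mod_cast Fin.ext (by exact_mod_cast this)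
    · exfalso
      have him := congrArg Complex.im heq'
      rw [ha_def] at him
      simp only [Complex.neg_im] at him
      have h1 := ht_den j
      have h2 := ht_den j'
      have ht1 := ht_pos j
      have ht2 := ht_pos j'
      have hp1 : 0 < 2*((j:ℝ)+1)/(1+((j:ℝ)+1)^2) := by positivity
      have hp2 : 0 < 2*((j':ℝ)+1)/(1+((j':ℝ)+1)^2) := by positivity
      rw [him] at hp1
      linarith

/-- **Theorem 4.1(b2).**  For every `n ≥ 1`, the closure of `𝒢_{ℓ₁}` is disjoint from
`𝒢_{ℓ₂}` whenever `ℓ₁ ≠ ℓ₂`; in particular the closures of the `⌊n/2⌋ + 1` generic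
*congruence bundles are pairwise different. -/
theorem closure_genStar_inter_genStar_eq_empty (n ℓ₁ ℓ₂ : ℕ) (hn : 1 ≤ n)
    (h₁ : ℓ₁ ≤ n / 2) (h₂ : ℓ₂ ≤ n / 2) (hne : ℓ₁ ≠ ℓ₂) :
    closure (genStar n ℓ₁) ∩ genStar n ℓ₂ = ∅ ∧
      closure (genStar n ℓ₁) ≠ closure (genStar n ℓ₂) := by
  constructor
  · rw [Set.eq_empty_iff_forall_notMem]
    rintro A ⟨hA1, hA2⟩
    exact hne (genStar_closure_main hA2 hA1)
  · intro hceq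
    obtain ⟨A, hA⟩ := genStar_nonempty n ℓ₂ h₂
    have : A ∈ closure (genStar n ℓ₁) := hceq ▸ subset_closure hA
    exact hne (genStar_closure_main hA this)
end
end
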